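/- Suppose f ∈ H has the (a,δ)-stable approximation property with 0 < δ < 1 and a > 0, and let c > a²/(1−δ). Then the ASVD1 approximation satisfies ‖f − P_Λ f‖ ≤ (δ + max{a√ε, a²δ/(c(1−δ) − a²)}) ‖f‖. -/

import Mathlib

open scoped ComplexInnerProductSpace

set_option maxHeartbeats 1000000

theorem stmt_15 {H : Type*} [NormedAddCommGroup H] [InnerProductSpace ℂ H]
    {N : ℕ} (φ : Fin N → H) (σ : Fin N → ℝ)
    (v : Fin N → EuclideanSpace ℂ (Fin N)) (hv : Orthonormal ℂ v)
    (G : Matrix (Fin N) (Fin N) ℂ) (hG : ∀ m k, G m k = ⟪φ m, φ k⟫)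
    (heig : ∀ n i, G.mulVec (fun j => v n j) i = (σ n : ℂ) * v n i)
    (T : EuclideanSpace ℂ (Fin N) → H) (hT : ∀ z, T z = ∑ n, z n • φ n)
    (ξ : Fin N → H) (hξ : ∀ n, ξ n = T (v n))
    (hσ : ∀ n, 0 ≤ σ n) (ε c : ℝ) (hε : 0 < ε)
    (f : H) (y : EuclideanSpace ℂ (Fin N)) (hy : ∀ n, y n = ⟪φ n, f⟫)
    (a δ : ℝ) (ha : 0 < a) (hδ0 : 0 < δ) (hδ1 : δ < 1)
    (hc : a ^ 2 / (1 - δ) < c)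
    (hstable : ∃ z : EuclideanSpace ℂ (Fin N),
      ‖f - T z‖ ≤ δ * ‖f‖ ∧ ‖z‖ ≤ a * ‖f‖) :
    ‖f - ∑ n ∈ Finset.univ.filter (fun n => ε < σ n ∧ ‖⟪v n, y⟫‖ / σ n ≤ c * ‖y‖),
        (⟪ξ n, f⟫ / (σ n : ℂ)) • ξ n‖ ≤
      (δ + max (a * Real.sqrt ε) (a ^ 2 * δ / (c * (1 - δ) - a ^ 2))) * ‖f‖ := by
  classical
  -- trivial case f = 0
  by_cases hf : f = 0
  · have hy0 : ∀ n, ⟪ξ n, f⟫ = (0 : ℂ) := by intro n; simp [hf]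
    simp [hf, hy0]
  have hfpos : 0 < ‖f‖ := norm_pos_iff.mpr hf
  obtain ⟨z, hz1, hz2⟩ := hstable
  -- constants
  have h1δ : 0 < 1 - δ := by linarith
  have hcpos : 0 < c := lt_trans (div_pos (by positivity) h1δ) hc
  have hD : 0 < c * (1 - δ) - a ^ 2 := by
    have := (div_lt_iff₀ h1δ).mp hc
    linarith
  set D : ℝ := c * (1 - δ) - a ^ 2 with hDdef
  set K : ℝ := a * δ / D with hKdef
  have hK : 0 < K := by positivity
  set M : ℝ := max (Real.sqrt ε) K with hMdef
  have hM : 0 < M := lt_of_lt_of_le hK (le_max_right _ _)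
  -- N nonempty
  have hN : N ≠ 0 := by
    rintro rfl
    rw [hT] at hz1
    simp only [Finset.univ_eq_empty, Finset.sum_empty, sub_zero] at hz1
    nlinarith
  haveI : Nonempty (Fin N) := ⟨⟨0, Nat.pos_of_ne_zero hN⟩⟩
  -- orthonormal basis from v
  have card_eq : Fintype.card (Fin N) = Module.finrank ℂ (EuclideanSpace ℂ (Fin N)) := by
    simp [finrank_euclideanSpace]
  obtain ⟨b, hb⟩ : ∃ bb : OrthonormalBasis (Fin N) ℂ (EuclideanSpace ℂ (Fin N)),
      ∀ i, bb i = v i := by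
    refine ⟨(basisOfOrthonormalOfCardEqFinrank hv card_eq).toOrthonormalBasis
      (by rwa [coe_basisOfOrthonormalOfCardEqFinrank]), fun i => ?_⟩
    have h : ((basisOfOrthonormalOfCardEqFinrank hv card_eq).toOrthonormalBasis
        (by rwa [coe_basisOfOrthonormalOfCardEqFinrank]) :
        Fin N → EuclideanSpace ℂ (Fin N)) = v := by
      rw [Module.Basis.coe_toOrthonormalBasis, coe_basisOfOrthonormalOfCardEqFinrank]
    exact congrFun h i
  set zh : Fin N → ℂ := fun n => ⟪v n, z⟫ with hzhdef
  -- z expansion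
  have hzexp : ∑ n, zh n • v n = z := by
    have := b.sum_repr' z
    simpa [hb] using this
  -- Parseval
  have hparseval : ∀ x : EuclideanSpace ℂ (Fin N), ∑ n, ‖⟪v n, x⟫‖ ^ 2 = ‖x‖ ^ 2 := by
    intro x
    have h1 : ‖b.repr x‖ = ‖x‖ := b.repr.norm_map x
    have h2 : ∀ n, b.repr x n = ⟪v n, x⟫ := by
      intro n; rw [← hb n]; exact b.repr_apply_apply x n
    rw [← h1, EuclideanSpace.norm_eq, Real.sq_sqrt (by positivity)]
    exact Finset.sum_congr rfl fun n _ => by rw [h2]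
  clear hb b card_eq
  -- Gram matrix of ξ
  have hGram : ∀ m n, ⟪ξ m, ξ n⟫ = if m = n then (σ n : ℂ) else 0 := by
    intro m n
    have hmul : ∀ j, ⟪φ j, ξ n⟫ = (σ n : ℂ) * v n j := by
      intro j
      rw [hξ, hT, inner_sum]
      have : ∀ k, ⟪φ j, v n k • φ k⟫ = G j k * v n k := by
        intro k; rw [inner_smul_right, hG, mul_comm]
      rw [Finset.sum_congr rfl fun k _ => this k]
      exact heig n j
    rw [hξ m, hT, sum_inner]
    have : ∀ j, ⟪v m j • φ j, ξ n⟫ = (σ n : ℂ) * ((starRingEnd ℂ) (v m j) * v n j) := by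
      intro j
      rw [inner_smul_left, hmul j]; ring
    rw [Finset.sum_congr rfl fun j _ => this j, ← Finset.mul_sum]
    have hvmn : ∑ j, (starRingEnd ℂ) (v m j) * v n j = if m = n then 1 else 0 := by
      have := orthonormal_iff_ite.mp hv m n
      simpa [PiLp.inner_apply, RCLike.inner_apply, mul_comm] using this
    rw [hvmn]
    by_cases h : m = n <;> simp [h]
    
  have hxinormsq : ∀ n, ‖ξ n‖ ^ 2 = σ n := by
    intro n
    have h1 : ⟪ξ n, ξ n⟫ = (σ n : ℂ) := by rw [hGram]; simp
    have h2 := @inner_self_eq_norm_sq ℂ _ _ _ _ (ξ n)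
    rw [h1] at h2
    simpa using h2.symm
  have hxinorm : ∀ n, ‖ξ n‖ = Real.sqrt (σ n) := by
    intro n
    rw [← hxinormsq n, Real.sqrt_sq (norm_nonneg _)]
  -- inner with y
  have hxif : ∀ n, ⟪ξ n, f⟫ = ⟪v n, y⟫ := by
    intro n
    rw [hξ, hT, sum_inner, PiLp.inner_apply]
    refine Finset.sum_congr rfl fun j _ => ?_
    rw [inner_smul_left, hy, RCLike.inner_apply]; ring
  -- T z expansion in ξ
  have hTz : T z = ∑ n, zh n • ξ n := by
    conv_lhs => rw [← hzexp]
    rw [hT]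
    have happly : ∀ j, (∑ n, zh n • v n : EuclideanSpace ℂ (Fin N)) j = ∑ n, zh n * v n j := by
      intro j; simp [WithLp.ofLp_sum, Finset.sum_apply]
    calc ∑ j, (∑ n, zh n • v n : EuclideanSpace ℂ (Fin N)) j • φ j
        = ∑ j, ∑ n, (zh n * v n j) • φ j := by
          refine Finset.sum_congr rfl fun j _ => ?_
          rw [happly, Finset.sum_smul]
      _ = ∑ n, ∑ j, (zh n * v n j) • φ j := Finset.sum_comm
      _ = ∑ n, zh n • ξ n := by
          refine Finset.sum_congr rfl fun n _ => ?_
          rw [hξ, hT, Finset.smul_sum]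
          exact Finset.sum_congr rfl fun j _ => (smul_smul _ _ _).symm
  -- the index set
  set Λ : Finset (Fin N) :=
    Finset.univ.filter (fun n => ε < σ n ∧ ‖⟪v n, y⟫‖ / σ n ≤ c * ‖y‖) with hΛdef
  set p : H := ∑ n ∈ Λ, (⟪ξ n, f⟫ / (σ n : ℂ)) • ξ n with hpdef
  set q : H := ∑ n ∈ Λ, zh n • ξ n with hqdef
  -- orthogonality: f - p ⟂ ξ m for m ∈ Λ
  have hperp : ∀ m ∈ Λ, ⟪ξ m, f - p⟫ = 0 := by
    intro m hm
    have hσm : (0:ℝ) < σ m := lt_trans hε (Finset.mem_filter.mp hm).2.1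
    have hσm' : (σ m : ℂ) ≠ 0 := by exact_mod_cast ne_of_gt hσm
    rw [inner_sub_right, hpdef, inner_sum]
    have h : ∀ n ∈ Λ, ⟪ξ m, (⟪ξ n, f⟫ / (σ n : ℂ)) • ξ n⟫
        = if m = n then ⟪ξ m, f⟫ else 0 := by
      intro n _
      rw [inner_smul_right, hGram]
      by_cases h : m = n
      · subst h; simp [hσm']
      · simp [h]
    rw [Finset.sum_congr rfl h, Finset.sum_ite_eq]
    simp [hm]
  -- ‖f - p‖ ≤ ‖f - q‖
  have hpq : ‖f - p‖ ≤ ‖f - q‖ := by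
    have hqp : ⟪p - q, f - p⟫ = 0 := by
      rw [hpdef, hqdef, ← Finset.sum_sub_distrib, sum_inner]
      refine Finset.sum_eq_zero fun n hn => ?_
      rw [← sub_smul, inner_smul_left, hperp n hn, mul_zero]
    have hfp : ⟪f - p, p - q⟫ = 0 := inner_eq_zero_symm.mp hqp
    have hpyth : ‖f - q‖ ^ 2 = ‖f - p‖ ^ 2 + ‖p - q‖ ^ 2 := by
      have h : f - q = (f - p) + (p - q) := by abel
      rw [h, pow_two, pow_two, pow_two]
      exact norm_add_sq_eq_norm_sq_add_norm_sq_of_inner_eq_zero _ _ hfp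
    nlinarith [norm_nonneg (f - q), norm_nonneg (f - p), sq_nonneg ‖p - q‖]
  -- tail
  have htail : T z - q = ∑ n ∈ Λᶜ, zh n • ξ n := by
    rw [hTz, hqdef, ← Finset.sum_compl_add_sum Λ (fun n => zh n • ξ n)]
    abel
  have htailnorm : ‖∑ n ∈ Λᶜ, zh n • ξ n‖ ^ 2 = ∑ n ∈ Λᶜ, ‖zh n‖ ^ 2 * σ n := by
    have hinner : ⟪∑ n ∈ Λᶜ, zh n • ξ n, ∑ n ∈ Λᶜ, zh n • ξ n⟫
        = ((∑ n ∈ Λᶜ, ‖zh n‖ ^ 2 * σ n : ℝ) : ℂ) := by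
      rw [sum_inner]
      have h : ∀ m ∈ Λᶜ, ⟪zh m • ξ m, ∑ n ∈ Λᶜ, zh n • ξ n⟫
          = ((‖zh m‖ ^ 2 * σ m : ℝ) : ℂ) := by
        intro m hm
        rw [inner_smul_left, inner_sum]
        have h2 : ∀ n ∈ Λᶜ, ⟪ξ m, zh n • ξ n⟫ = if m = n then zh n * (σ n : ℂ) else 0 := by
          intro n _
          rw [inner_smul_right, hGram]
          by_cases h : m = n
          · subst h; simp
          · simp [h]
        have hconj : (starRingEnd ℂ) (zh m) * zh m = ((‖zh m‖ ^ 2 : ℝ) : ℂ) := by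
          rw [mul_comm, Complex.mul_conj, Complex.normSq_eq_norm_sq]
        rw [Finset.sum_congr rfl h2, Finset.sum_ite_eq, if_pos hm, ← mul_assoc, hconj]
        push_cast
        ring
      rw [Finset.sum_congr rfl h]
      push_cast
      ring
    have h3 := @inner_self_eq_norm_sq ℂ _ _ _ _ (∑ n ∈ Λᶜ, zh n • ξ n)
    rw [hinner] at h3
    simp only [RCLike.re_to_complex, Complex.ofReal_re] at h3
    exact h3.symm
  -- coefficient bound
  have hzh_le : ∀ n, ‖zh n‖ ≤ a * ‖f‖ := by
    intro n
    calc ‖zh n‖ ≤ ‖v n‖ * ‖z‖ := norm_inner_le_norm _ _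
      _ = ‖z‖ := by rw [hv.1 n, one_mul]
      _ ≤ a * ‖f‖ := hz2
  -- lower bound on ‖y‖
  have hylow : (1 - δ) * ‖f‖ ≤ a * ‖y‖ := by
    have hzy : ⟪z, y⟫ = ⟪T z, f⟫ := by
      rw [hT, sum_inner, PiLp.inner_apply]
      refine Finset.sum_congr rfl fun j _ => ?_
      rw [inner_smul_left, hy, RCLike.inner_apply]; ring
    have h1 : RCLike.re ⟪T z, f⟫ ≤ ‖z‖ * ‖y‖ := by
      rw [← hzy]; exact re_inner_le_norm z y
    have h2 : ‖f‖ ^ 2 - ‖f - T z‖ * ‖f‖ ≤ RCLike.re ⟪T z, f⟫ := by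
      have ha1 : RCLike.re ⟪f - T z, f⟫ ≤ ‖f - T z‖ * ‖f‖ := re_inner_le_norm _ _
      have hsplit : RCLike.re ⟪T z, f⟫ = RCLike.re ⟪f, f⟫ - RCLike.re ⟪f - T z, f⟫ := by
        rw [inner_sub_left]; simp
      have hff : RCLike.re ⟪f, f⟫ = ‖f‖ ^ 2 := @inner_self_eq_norm_sq ℂ _ _ _ _ f
      rw [hsplit, hff]; linarith
    have h3 : ‖z‖ * ‖y‖ ≤ a * ‖f‖ * ‖y‖ :=
      mul_le_mul_of_nonneg_right hz2 (norm_nonneg _)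
    nlinarith
  -- termwise bound on Λᶜ
  have hterm : ∀ n ∈ Λᶜ, σ n ≤ M ^ 2 := by
    intro n hn
    have hn' : ¬ (ε < σ n ∧ ‖⟪v n, y⟫‖ / σ n ≤ c * ‖y‖) := by
      intro hcontra
      exact (Finset.mem_compl.mp hn)
        (by rw [hΛdef]; exact Finset.mem_filter.mpr ⟨Finset.mem_univ n, hcontra⟩)
    by_cases hcase : σ n ≤ ε
    · calc σ n ≤ ε := hcase
        _ = Real.sqrt ε ^ 2 := (Real.sq_sqrt hε.le).symm
        _ ≤ M ^ 2 := pow_le_pow_left₀ (Real.sqrt_nonneg ε) (le_max_left _ _) 2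
    · push_neg at hcase
      have hσn : 0 < σ n := lt_trans hε hcase
      have hbig : c * ‖y‖ < ‖⟪v n, y⟫‖ / σ n := not_le.mp (fun hle => hn' ⟨hcase, hle⟩)
      have hb2 : c * ‖y‖ * σ n < ‖⟪v n, y⟫‖ := (lt_div_iff₀ hσn).mp hbig
      -- upper bound on the coefficient
      have hTzin : ⟪ξ n, T z⟫ = zh n * (σ n : ℂ) := by
        rw [hTz, inner_sum]
        have h2 : ∀ m, ⟪ξ n, zh m • ξ m⟫ = if n = m then zh m * (σ m : ℂ) else 0 := by
          intro m
          rw [inner_smul_right, hGram]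
          by_cases h : n = m
          · subst h; simp
          · simp [h]
        rw [Finset.sum_congr rfl fun m _ => h2 m, Finset.sum_ite_eq, if_pos (Finset.mem_univ n)]
      have hup : ‖⟪v n, y⟫‖ ≤ Real.sqrt (σ n) * (δ * ‖f‖) + a * ‖f‖ * σ n := by
        rw [← hxif]
        have hdecomp : ⟪ξ n, f⟫ = ⟪ξ n, f - T z⟫ + ⟪ξ n, T z⟫ := by
          rw [← inner_add_right]; congr 1; abel
        calc ‖⟪ξ n, f⟫‖ ≤ ‖⟪ξ n, f - T z⟫‖ + ‖⟪ξ n, T z⟫‖ := by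
              rw [hdecomp]; exact norm_add_le _ _
          _ ≤ Real.sqrt (σ n) * (δ * ‖f‖) + a * ‖f‖ * σ n := by
              have e1 : ‖⟪ξ n, f - T z⟫‖ ≤ Real.sqrt (σ n) * (δ * ‖f‖) := by
                calc ‖⟪ξ n, f - T z⟫‖ ≤ ‖ξ n‖ * ‖f - T z‖ := norm_inner_le_norm _ _
                  _ ≤ Real.sqrt (σ n) * (δ * ‖f‖) := by
                      rw [hxinorm]
                      exact mul_le_mul_of_nonneg_left hz1 (Real.sqrt_nonneg _)
              have e2 : ‖⟪ξ n, T z⟫‖ ≤ a * ‖f‖ * σ n := by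
                rw [hTzin]
                rw [norm_mul, Complex.norm_real, Real.norm_of_nonneg hσn.le]
                exact mul_le_mul_of_nonneg_right (hzh_le n) hσn.le
              linarith
      -- conclude σ n < K^2
      set s : ℝ := Real.sqrt (σ n) with hsdef
      have hs2 : s ^ 2 = σ n := Real.sq_sqrt hσn.le
      have hspos : 0 < s := Real.sqrt_pos.mpr hσn
      -- c * ‖y‖ * σ n < s * δ * ‖f‖ + a * ‖f‖ * σ n  and (1-δ)‖f‖ ≤ a ‖y‖
      have key : s ^ 2 * D < s * (a * δ) := by
        have h4 : c * ((1 - δ) * ‖f‖) * σ n ≤ c * (a * ‖y‖) * σ n := by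
          have := mul_le_mul_of_nonneg_left hylow hcpos.le
          exact mul_le_mul_of_nonneg_right this hσn.le
        have h5 : c * (a * ‖y‖) * σ n < a * (s * (δ * ‖f‖) + a * ‖f‖ * σ n) := by
          have := mul_lt_mul_of_pos_left (lt_of_lt_of_le hb2 hup) ha
          calc c * (a * ‖y‖) * σ n = a * (c * ‖y‖ * σ n) := by ring
            _ < a * (s * (δ * ‖f‖) + a * ‖f‖ * σ n) := this
        have h6 : c * (1 - δ) * σ n * ‖f‖ < (s * a * δ + a ^ 2 * σ n) * ‖f‖ := by
          nlinarith
        have h7 : c * (1 - δ) * σ n < s * a * δ + a ^ 2 * σ n :=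
          lt_of_mul_lt_mul_right (by nlinarith) hfpos.le
        rw [hDdef, ← hs2] at *
        nlinarith
      have hsK : s < K := by
        rw [hKdef]
        rw [lt_div_iff₀ hD]
        nlinarith
      have hKM : K ≤ M := le_max_right _ _
      nlinarith
  -- tail norm bound
  have htail2 : ‖T z - q‖ ≤ M * (a * ‖f‖) := by
    rw [htail]
    have h1 : ‖∑ n ∈ Λᶜ, zh n • ξ n‖ ^ 2 ≤ M ^ 2 * (a * ‖f‖) ^ 2 := by
      rw [htailnorm]
      calc ∑ n ∈ Λᶜ, ‖zh n‖ ^ 2 * σ n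
          ≤ ∑ n ∈ Λᶜ, ‖zh n‖ ^ 2 * M ^ 2 :=
            Finset.sum_le_sum fun n hn =>
              mul_le_mul_of_nonneg_left (hterm n hn) (sq_nonneg _)
        _ = M ^ 2 * ∑ n ∈ Λᶜ, ‖zh n‖ ^ 2 := by rw [← Finset.sum_mul]; ring
        _ ≤ M ^ 2 * ∑ n, ‖zh n‖ ^ 2 := by
            refine mul_le_mul_of_nonneg_left ?_ (sq_nonneg _)
            refine Finset.sum_le_sum_of_subset_of_nonneg (Finset.subset_univ _) ?_
            intros; positivity
        _ = M ^ 2 * ‖z‖ ^ 2 := by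
            congr 1
            simp only [hzhdef]
            exact hparseval z
        _ ≤ M ^ 2 * (a * ‖f‖) ^ 2 := by
            refine mul_le_mul_of_nonneg_left ?_ (sq_nonneg _)
            exact pow_le_pow_left₀ (norm_nonneg _) hz2 2
    nlinarith [norm_nonneg (∑ n ∈ Λᶜ, zh n • ξ n), mul_pos hM (mul_pos ha hfpos)]
  -- final assembly
  have hfinal : ‖f - p‖ ≤ (δ + a * M) * ‖f‖ := by
    calc ‖f - p‖ ≤ ‖f - q‖ := hpq
      _ ≤ ‖f - T z‖ + ‖T z - q‖ := by
          have h : f - q = (f - T z) + (T z - q) := by abel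
          rw [h]; exact norm_add_le _ _
      _ ≤ δ * ‖f‖ + M * (a * ‖f‖) := add_le_add hz1 htail2
      _ = (δ + a * M) * ‖f‖ := by ring
  have hMeq : a * M = max (a * Real.sqrt ε) (a ^ 2 * δ / D) := by
    rw [hMdef, mul_max_of_nonneg _ _ ha.le]
    congr 1
    rw [hKdef]; ring
  rw [← hMeq]
  exact hfinal
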